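/- Let f₁,…,fₙ : X → X be continuous open maps (X the circle S¹ or a closed interval) and let M be a minimal set for IFS(f₁,…,fₙ). If M has finitely many (and at least one) nontrivial connected components I₁,…,I_k, then M = I₁ ∪ … ∪ I_k, i.e. M is exactly the union of its nontrivial connected components. -/

import Mathlib

open Set Topology Filter

/-- The circle. -/
abbrev S1 := AddCircle (1 : ℝ)

/-- Apply a word `l = [i₁, …, i_k]` of generators: `f i₁ ∘ ⋯ ∘ f i_k`. -/
def applyWord {X : Type*} {n : ℕ} (f : Fin n → X → X) (l : List (Fin n)) (x : X) : X :=
  l.foldr (fun i y => f i y) x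

/-- The orbit of `x` under the semigroup `IFS(f₁,…,fₙ)` (nonempty words). -/
def orbitIFS {X : Type*} {n : ℕ} (f : Fin n → X → X) (x : X) : Set X :=
  {y | ∃ l : List (Fin n), l ≠ [] ∧ y = applyWord f l x}

/-- `M` is a minimal set for the IFS generated by `f₁,…,fₙ`. -/
def IsMinimalIFS {X : Type*} [TopologicalSpace X] {n : ℕ} (f : Fin n → X → X)
    (M : Set X) : Prop :=
  M.Nonempty ∧ IsClosed M ∧ (∀ i, f i '' M ⊆ M) ∧
    ∀ x ∈ M, closure (orbitIFS f x) = M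

/-- A Cantor set: nonempty, compact, perfect and totally disconnected. -/
def IsCantorSet {X : Type*} [TopologicalSpace X] (K : Set X) : Prop :=
  K.Nonempty ∧ IsCompact K ∧ Perfect K ∧ IsTotallyDisconnected K

/-- `X` is (homeomorphic to) the circle or a (nondegenerate) closed interval. -/
def IsCircleOrInterval (X : Type*) [TopologicalSpace X] : Prop :=
  Nonempty (X ≃ₜ S1) ∨ ∃ a b : ℝ, a < b ∧ Nonempty (X ≃ₜ Set.Icc a b)

/-- The canonical decomposition `M = 𝓘 ∪ K ∪ N` of a closed set:
`𝓘` is the interior (union of components of the interior), `K` is the maximal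
Cantor set contained in `M \ 𝓘` (possibly empty), and `N` is the countable remainder. -/
def IsCanonicalDecomp {X : Type*} [TopologicalSpace X] (M I K N : Set X) : Prop :=
  I = interior M ∧
  (IsCantorSet K ∨ K = ∅) ∧
  K ⊆ M \ I ∧
  (∀ K₁ : Set X, IsCantorSet K₁ → K ⊆ K₁ → K₁ ⊆ M \ I → K₁ = K) ∧
  N = M \ (I ∪ K) ∧
  N.Countable

/-- A symmetric Cantorval: a nonempty compact set which is the closure of its interior,
and such that both endpoints of every nontrivial connected component are accumulation
points of one-point connected components. -/
def IsSymmetricCantorval {X : Type*} [TopologicalSpace X] (M : Set X) : Prop :=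
  M.Nonempty ∧ IsCompact M ∧ M = closure (interior M) ∧
  ∀ x ∈ M, ¬ (connectedComponentIn M x).Subsingleton →
    ∀ z ∈ frontier (connectedComponentIn M x),
      AccPt z (𝓟 {y | y ∈ M ∧ connectedComponentIn M y = {y}})


lemma interior_nonempty_Icc {a b : ℝ} {C : Set (Icc a b)}
    (hC : IsPreconnected C) (hnt : C.Nontrivial) : (interior C).Nonempty := by
  have hC' : IsPreconnected (Subtype.val '' C) :=
    hC.image _ continuous_subtype_val.continuousOn
  obtain ⟨x, hx, y, hy, hxy⟩ := hnt
  have hxy' : (x : ℝ) ≠ y := fun h => hxy (Subtype.ext h)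
  wlog hlt : (x : ℝ) < (y : ℝ) generalizing x y
  · exact this y hy x hx hxy.symm hxy'.symm (hxy'.lt_or_gt.resolve_left hlt)
  have hIcc : Icc (x : ℝ) (y : ℝ) ⊆ Subtype.val '' C :=
    hC'.Icc_subset ⟨x, hx, rfl⟩ ⟨y, hy, rfl⟩
  set m : ℝ := ((x : ℝ) + y) / 2 with hm
  have hm1 : (x : ℝ) < m := by simp [hm]; linarith
  have hm2 : m < (y : ℝ) := by simp [hm]; linarith
  have hmab : m ∈ Icc a b := ⟨le_trans x.2.1 hm1.le, le_trans hm2.le y.2.2⟩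
  have hV : IsOpen (Subtype.val ⁻¹' (Ioo (x : ℝ) (y : ℝ)) : Set (Icc a b)) :=
    isOpen_Ioo.preimage continuous_subtype_val
  have hVC : (Subtype.val ⁻¹' (Ioo (x : ℝ) (y : ℝ)) : Set (Icc a b)) ⊆ C := by
    intro z hz
    obtain ⟨w, hwC, hwz⟩ := hIcc (Ioo_subset_Icc_self hz)
    exact (Subtype.ext hwz.symm : z = w) ▸ hwC
  exact ⟨⟨m, hmab⟩, interior_maximal hVC hV ⟨hm1, hm2⟩⟩

lemma interior_nonempty_S1 {C : Set S1} (hC : IsPreconnected C)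
    (hnt : C.Nontrivial) : (interior C).Nonempty := by
  haveI : Fact ((0 : ℝ) < 1) := ⟨one_pos⟩
  by_cases huniv : C = univ
  · exact huniv ▸ ⟨0, by simp⟩
  obtain ⟨p, hp⟩ : ∃ p : S1, p ∉ C := by
    by_contra h
    exact huniv (eq_univ_of_forall (by simpa using h))
  obtain ⟨t, ht⟩ : ∃ t : ℝ, (t : S1) = p := Quotient.exists_rep p
  have hπ : IsOpenMap ((↑) : ℝ → S1) := QuotientAddGroup.isOpenMap_coe
  -- representative in `Ico t (t+1)`
  have rep : ∀ z : S1, ∃ s : ℝ, s ∈ Ico t (t + 1) ∧ (s : S1) = z := by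
    intro z
    have h := (QuotientAddGroup.equivIcoMod one_pos t).symm_apply_apply z
    rw [QuotientAddGroup.equivIcoMod_symm_apply] at h
    exact ⟨(QuotientAddGroup.equivIcoMod one_pos t z : ℝ),
      (QuotientAddGroup.equivIcoMod one_pos t z).2, h⟩
  have inj : ∀ s₁ s₂ : ℝ, s₁ ∈ Ico t (t + 1) → s₂ ∈ Ico t (t + 1) →
      (s₁ : S1) = (s₂ : S1) → s₁ = s₂ := by
    intro s₁ s₂ h1 h2 h
    exact (AddCircle.coe_eq_coe_iff_of_mem_Ico h1 h2).mp h
  have repIoo : ∀ z : S1, z ∈ C → ∃ s : ℝ, s ∈ Ioo t (t + 1) ∧ (s : S1) = z := by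
    intro z hz
    obtain ⟨s, hs, hsz⟩ := rep z
    refine ⟨s, ⟨lt_of_le_of_ne hs.1 ?_, hs.2⟩, hsz⟩
    rintro rfl
    rw [← hsz, ht] at hz
    exact hp hz
  have key : ∀ c d : ℝ, c ∈ Ioo t (t + 1) → d ∈ Ioo t (t + 1) →
      (c : S1) ∈ C → (d : S1) ∈ C → ∀ e, c < e → e < d → (e : S1) ∈ C := by
    intro c d hc hd hcC hdC e hce hed
    by_contra heC
    have he : e ∈ Ioo t (t + 1) := ⟨lt_trans hc.1 hce, lt_trans hed hd.2⟩
    have hu : IsOpen (((↑) : ℝ → S1) '' Ioo t e) := hπ _ isOpen_Ioo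
    have hv : IsOpen (((↑) : ℝ → S1) '' Ioo e (t + 1)) := hπ _ isOpen_Ioo
    have hsub : C ⊆ ((↑) : ℝ → S1) '' Ioo t e ∪ ((↑) : ℝ → S1) '' Ioo e (t + 1) := by
      intro z hz
      obtain ⟨s, hs, hsz⟩ := repIoo z hz
      have hse : s ≠ e := by rintro rfl; exact heC (hsz ▸ hz)
      rcases hse.lt_or_gt with h | h
      · exact Or.inl ⟨s, ⟨hs.1, h⟩, hsz⟩
      · exact Or.inr ⟨s, ⟨h, hs.2⟩, hsz⟩
    have hcu : (c : S1) ∈ C ∩ (((↑) : ℝ → S1) '' Ioo t e) :=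
      ⟨hcC, ⟨c, ⟨hc.1, hce⟩, rfl⟩⟩
    have hdv : (d : S1) ∈ C ∩ (((↑) : ℝ → S1) '' Ioo e (t + 1)) :=
      ⟨hdC, ⟨d, ⟨hed, hd.2⟩, rfl⟩⟩
    obtain ⟨z, _, ⟨s₁, hs₁, hz₁⟩, ⟨s₂, hs₂, hz₂⟩⟩ :=
      hC _ _ hu hv hsub ⟨_, hcu⟩ ⟨_, hdv⟩
    have : s₁ = s₂ := inj s₁ s₂ ⟨hs₁.1.le, lt_trans hs₁.2 he.2⟩
      ⟨le_of_lt (lt_trans he.1 hs₂.1), hs₂.2⟩ (hz₁.trans hz₂.symm)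
    exact absurd (this ▸ hs₁.2) (not_lt.mpr (this ▸ hs₂.1.le)).elim
  obtain ⟨x, hx, y, hy, hxy⟩ := hnt
  obtain ⟨sx, hsx, hsxx⟩ := repIoo x hx
  obtain ⟨sy, hsy, hsyy⟩ := repIoo y hy
  have hsxy : sx ≠ sy := by rintro rfl; exact hxy (hsxx.symm.trans hsyy)
  wlog hlt : sx < sy generalizing x y sx sy
  · exact this y hy x hx hxy.symm sy hsy hsyy sx hsx hsxx hsxy.symm
      (hsxy.lt_or_gt.resolve_left hlt)
  have hIoo : (((↑) : ℝ → S1) '' Ioo sx sy) ⊆ C := by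
    rintro z ⟨s, hs, rfl⟩
    exact key sx sy hsx hsy (hsxx.symm ▸ hx) (hsyy.symm ▸ hy) s hs.1 hs.2
  refine ⟨(((sx + sy) / 2 : ℝ) : S1), interior_maximal hIoo (hπ _ isOpen_Ioo) ?_⟩
  exact ⟨(sx + sy) / 2, ⟨by linarith, by linarith⟩, rfl⟩

lemma interior_nonempty_of_connected {X : Type*} [TopologicalSpace X]
    (hX : IsCircleOrInterval X) {C : Set X} (hC : IsPreconnected C)
    (hnt : C.Nontrivial) : (interior C).Nonempty := by
  have main : ∀ {Y : Type} [TopologicalSpace Y] (e : X ≃ₜ Y),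
      (∀ D : Set Y, IsPreconnected D → D.Nontrivial → (interior D).Nonempty) →
      (interior C).Nonempty := by
    intro Y _ e hY
    have h := hY (e '' C) (hC.image e e.continuous.continuousOn) (hnt.image e.injective)
    have h2 : e.symm '' (e '' C) = C := by
      rw [← Set.image_comp, Homeomorph.symm_comp_self, Set.image_id]
    have : interior C = e.symm '' interior (e '' C) := by
      rw [Homeomorph.image_interior, h2]
    rw [this]
    exact h.image _
  rcases hX with ⟨⟨e⟩⟩ | ⟨a, b, hab, ⟨e⟩⟩
  · exact main e fun D hD hDnt => interior_nonempty_S1 hD hDnt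
  · exact main e fun D hD hDnt => interior_nonempty_Icc hD hDnt

lemma not_isOpen_singleton_aux {Y : Type*} [TopologicalSpace Y] [T1Space Y]
    [ConnectedSpace Y] [Nontrivial Y] (y : Y) : ¬ IsOpen ({y} : Set Y) := by
  intro h
  have := isClopen_iff.mp ⟨isClosed_singleton, h⟩
  rcases this with h' | h'
  · exact (singleton_nonempty y).ne_empty h'
  · obtain ⟨z, hz⟩ := exists_ne y
    exact hz (by simpa using h'.symm.subset (mem_univ z))

lemma singleton_not_isOpen {X : Type*} [TopologicalSpace X]
    (hX : IsCircleOrInterval X) (x : X) : ¬ IsOpen ({x} : Set X) := by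
  haveI : Fact ((0 : ℝ) < 1) := ⟨one_pos⟩
  intro h
  rcases hX with ⟨⟨e⟩⟩ | ⟨a, b, hab, ⟨e⟩⟩
  · have h' : IsOpen ({e x} : Set S1) := by
      have := e.isOpenMap _ h; rwa [Set.image_singleton] at this
    haveI : Nontrivial S1 := by
      refine ⟨0, ((2⁻¹ : ℝ) : S1), fun hc => ?_⟩
      obtain ⟨n, hn⟩ := AddCircle.coe_eq_zero_iff (p := (1 : ℝ)).mp hc.symm
      rw [zsmul_eq_mul, mul_one] at hn
      have h2 : ((2 * n : ℤ) : ℝ) = ((1 : ℤ) : ℝ) := by push_cast; linarith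
      have h3 : (2 * n : ℤ) = 1 := Int.cast_injective h2
      omega
    exact not_isOpen_singleton_aux (e x) h'
  · have h' : IsOpen ({e x} : Set (Icc a b)) := by
      have := e.isOpenMap _ h; rwa [Set.image_singleton] at this
    haveI : Nontrivial (Icc a b) :=
      ⟨⟨a, left_mem_Icc.mpr hab.le⟩, ⟨b, right_mem_Icc.mpr hab.le⟩,
        fun hc => absurd (congrArg Subtype.val hc) hab.ne⟩
    haveI : ConnectedSpace (Icc a b) :=
      Subtype.connectedSpace ⟨⟨a, left_mem_Icc.mpr hab.le⟩, isPreconnected_Icc⟩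
    exact not_isOpen_singleton_aux (e x) h'

lemma image_nontrivial_of_openMap {X : Type*} [TopologicalSpace X]
    (hX : IsCircleOrInterval X) {g : X → X} (hg : IsOpenMap g)
    {C : Set X} (hC : IsPreconnected C) (hnt : C.Nontrivial) :
    (g '' C).Nontrivial := by
  by_contra h
  rw [Set.not_nontrivial_iff] at h
  obtain ⟨x, hx⟩ := hnt.nonempty
  have him : g '' C = {g x} := h.eq_singleton_of_mem ⟨x, hx, rfl⟩
  obtain ⟨z, hz⟩ := interior_nonempty_of_connected hX hC hnt
  have hopen : IsOpen (g '' interior C) := hg _ isOpen_interior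
  have hsub : g '' interior C ⊆ {g x} := him ▸ image_mono (f := g) interior_subset
  have hne' : (g '' interior C).Nonempty := ⟨g z, z, hz, rfl⟩
  have heq : g '' interior C = {g x} := hne'.subset_singleton_iff.mp hsub
  exact singleton_not_isOpen hX (g x) (heq ▸ hopen)

theorem stmt4 {X : Type*} [TopologicalSpace X] (hX : IsCircleOrInterval X)
    {n : ℕ} (f : Fin n → X → X)
    (hcont : ∀ i, Continuous (f i)) (hopen : ∀ i, IsOpenMap (f i))
    (M : Set X) (hM : IsMinimalIFS f M)
    (hfin : {C : Set X | (∃ x ∈ M, C = connectedComponentIn M x) ∧ ¬ C.Subsingleton}.Finite)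
    (hne : {C : Set X | (∃ x ∈ M, C = connectedComponentIn M x) ∧ ¬ C.Subsingleton}.Nonempty) :
    M = ⋃₀ {C : Set X | (∃ x ∈ M, C = connectedComponentIn M x) ∧ ¬ C.Subsingleton} := by
  obtain ⟨hMne, hMcl, hMinv, hMmin⟩ := hM
  set S := {C : Set X | (∃ x ∈ M, C = connectedComponentIn M x) ∧ ¬ C.Subsingleton} with hS
  have hUM : ⋃₀ S ⊆ M := by
    apply sUnion_subset
    rintro C ⟨⟨x, hx, rfl⟩, -⟩
    exact connectedComponentIn_subset M x
  refine Subset.antisymm ?_ hUM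
  have hclosed : IsClosed (⋃₀ S) := by
    rw [sUnion_eq_biUnion]
    refine hfin.isClosed_biUnion ?_
    rintro C ⟨⟨x, hx, rfl⟩, -⟩
    rw [connectedComponentIn_eq_image hx]
    exact hMcl.isClosedEmbedding_subtypeVal.isClosedMap _ isClosed_connectedComponent
  have step : ∀ x, x ∈ M → ¬(connectedComponentIn M x).Subsingleton →
      ∀ i, f i x ∈ M ∧ ¬(connectedComponentIn M (f i x)).Subsingleton := by
    intro x hx hnt i
    have h1 : f i x ∈ M := hMinv i ⟨x, hx, rfl⟩
    have hCpre : IsPreconnected (connectedComponentIn M x) := isPreconnected_connectedComponentIn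
    have himgsub : f i '' (connectedComponentIn M x) ⊆ M := by
      rintro y ⟨z, hz, rfl⟩
      exact hMinv i ⟨z, connectedComponentIn_subset M x hz, rfl⟩
    have himg : f i '' (connectedComponentIn M x) ⊆ connectedComponentIn M (f i x) :=
      (hCpre.image _ (hcont i).continuousOn).subset_connectedComponentIn
        ⟨x, mem_connectedComponentIn hx, rfl⟩ himgsub
    have hnt' : (f i '' connectedComponentIn M x).Nontrivial :=
      image_nontrivial_of_openMap hX (hopen i) hCpre (Set.not_subsingleton_iff.mp hnt)
    refine ⟨h1, fun hss => ?_⟩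
    exact (hnt'.not_subsingleton) (hss.anti himg)
  have word : ∀ l : List (Fin n), ∀ x, x ∈ M → ¬(connectedComponentIn M x).Subsingleton →
      applyWord f l x ∈ M ∧ ¬(connectedComponentIn M (applyWord f l x)).Subsingleton := by
    intro l
    induction l with
    | nil => intro x hx h; exact ⟨hx, h⟩
    | cons i l ih =>
      intro x hx h
      obtain ⟨h1, h2⟩ := ih x hx h
      exact step _ h1 h2 i
  obtain ⟨C0, ⟨x0, hx0, hC0⟩, hC0nt⟩ := hne
  have horb : orbitIFS f x0 ⊆ ⋃₀ S := by
    rintro y ⟨l, -, rfl⟩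
    obtain ⟨h1, h2⟩ := word l x0 hx0 (hC0 ▸ hC0nt)
    exact ⟨connectedComponentIn M _, ⟨⟨_, h1, rfl⟩, h2⟩, mem_connectedComponentIn h1⟩
  calc M = closure (orbitIFS f x0) := (hMmin x0 hx0).symm
    _ ⊆ closure (⋃₀ S) := closure_mono horb
    _ = ⋃₀ S := hclosed.closure_eq
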